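/- Let 0 ≤ e < 1, define k(f) = 1 + e·cos f, let J : ℝ → ℝ be differentiable with J'(f) = 1/k(f)², and let K₁,…,K₆ ∈ ℝ. Define ρ̃(f) = K₁·(1 − (3/2)·e·k(f)·J(f)·sin f) + K₂·k(f)·sin f + K₃·k(f)·cos f, θ(f) = K₄ − (3/2)·K₁·k(f)²·J(f) + K₂·(1 + k(f))·cos f − K₃·(1 + k(f))·sin f, and φ(f) = K₅·sin f + K₆·cos f. Then for all f ∈ ℝ: ρ̃''(f) − 2θ'(f) − (3/k(f))·ρ̃(f) = 0, θ''(f) + 2ρ̃'(f) = 0, and φ''(f) + φ(f) = 0. -/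

import Mathlib

/-- The Yamanaka–Ankersen general solution
`ρ̃ = K₁(1 − (3/2)e·k·J·sin f) + K₂·k·sin f + K₃·k·cos f`,
`θ = K₄ − (3/2)K₁·k²·J + K₂(1+k)cos f − K₃(1+k)sin f`,
`φ = K₅ sin f + K₆ cos f`, with `k = 1 + e·cos f` and `J' = 1/k²`,
solves the linear Tschauner–Hempel equations
`ρ̃'' − 2θ' − 3ρ̃/k = 0`, `θ'' + 2ρ̃' = 0`, `φ'' + φ = 0`. -/
theorem stmt_8 (e : ℝ) (he0 : 0 ≤ e) (he1 : e < 1)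
    (k : ℝ → ℝ) (hk : ∀ f, k f = 1 + e * Real.cos f)
    (J : ℝ → ℝ) (hJ : Differentiable ℝ J) (hJ' : ∀ f, deriv J f = 1 / (k f) ^ 2)
    (K₁ K₂ K₃ K₄ K₅ K₆ : ℝ) (ρ θ φ : ℝ → ℝ)
    (hρ : ∀ f, ρ f = K₁ * (1 - (3/2) * e * k f * J f * Real.sin f)
      + K₂ * k f * Real.sin f + K₃ * k f * Real.cos f)
    (hθ : ∀ f, θ f = K₄ - (3/2) * K₁ * (k f) ^ 2 * J f
      + K₂ * (1 + k f) * Real.cos f - K₃ * (1 + k f) * Real.sin f)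
    (hφ : ∀ f, φ f = K₅ * Real.sin f + K₆ * Real.cos f) :
    (∀ f, deriv (deriv ρ) f - 2 * deriv θ f - (3 / k f) * ρ f = 0) ∧
    (∀ f, deriv (deriv θ) f + 2 * deriv ρ f = 0) ∧
    (∀ f, deriv (deriv φ) f + φ f = 0) := by

  have hne : ∀ x : ℝ, 1 + e * Real.cos x ≠ 0 := by
    intro x
    have h1 := Real.neg_one_le_cos x
    nlinarith
  simp only [hk] at hρ hθ hJ'
  have hρf : ρ = fun f => K₁ * (1 - (3/2) * e * (1 + e * Real.cos f) * J f * Real.sin f)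
      + K₂ * (1 + e * Real.cos f) * Real.sin f + K₃ * (1 + e * Real.cos f) * Real.cos f :=
    funext hρ
  have hθf : θ = fun f => K₄ - (3/2) * K₁ * (1 + e * Real.cos f) ^ 2 * J f
      + K₂ * (1 + (1 + e * Real.cos f)) * Real.cos f
      - K₃ * (1 + (1 + e * Real.cos f)) * Real.sin f := funext hθ
  have hφf : φ = fun f => K₅ * Real.sin f + K₆ * Real.cos f := funext hφ
  subst hρf hθf hφf
  have hJD : ∀ x : ℝ, HasDerivAt J (1 / (1 + e * Real.cos x) ^ 2) x := by
    intro x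
    have h := (hJ x).hasDerivAt
    rwa [hJ' x] at h
  have hK : ∀ x : ℝ, HasDerivAt (fun f => 1 + e * Real.cos f) (e * -Real.sin x) x :=
    fun x => ((Real.hasDerivAt_cos x).const_mul e).const_add 1
  -- first derivatives
  have hρ1 : ∀ x : ℝ, HasDerivAt
      (fun f => K₁ * (1 - (3/2) * e * (1 + e * Real.cos f) * J f * Real.sin f)
        + K₂ * (1 + e * Real.cos f) * Real.sin f + K₃ * (1 + e * Real.cos f) * Real.cos f)
      (-(3/2 * e * K₁) * ((-e) * Real.sin x ^ 2 * J x + Real.sin x / (1 + e * Real.cos x)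
          + (1 + e * Real.cos x) * J x * Real.cos x)
        + K₂ * ((-e) * Real.sin x ^ 2 + (1 + e * Real.cos x) * Real.cos x)
        + K₃ * ((-e) * (Real.sin x * Real.cos x) - (1 + e * Real.cos x) * Real.sin x)) x := by
    intro x
    have h := (((((((hK x).const_mul ((3:ℝ)/2 * e)).mul (hJD x)).mul
        (Real.hasDerivAt_sin x)).const_sub 1).const_mul K₁).add
        ((((hK x).const_mul K₂).mul (Real.hasDerivAt_sin x)))).add
        ((((hK x).const_mul K₃).mul (Real.hasDerivAt_cos x)))
    refine h.congr_deriv ?_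
    simp only [Pi.mul_apply]
    have := hne x
    field_simp
    ring
  have hθ1 : ∀ x : ℝ, HasDerivAt
      (fun f => K₄ - (3/2) * K₁ * (1 + e * Real.cos f) ^ 2 * J f
        + K₂ * (1 + (1 + e * Real.cos f)) * Real.cos f
        - K₃ * (1 + (1 + e * Real.cos f)) * Real.sin f)
      (-(3/2 * K₁) + 3 * e * K₁ * ((1 + e * Real.cos x) * Real.sin x * J x)
        + K₂ * ((-e) * (Real.sin x * Real.cos x) - (2 + e * Real.cos x) * Real.sin x)
        - K₃ * ((2 + e * Real.cos x) * Real.cos x - e * Real.sin x ^ 2)) x := by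
    intro x
    have h := (((((((hK x).pow 2).const_mul ((3:ℝ)/2 * K₁)).mul (hJD x)).const_sub K₄).add
        ((((hK x).const_add 1).const_mul K₂).mul (Real.hasDerivAt_cos x))).sub
        ((((hK x).const_add 1).const_mul K₃).mul (Real.hasDerivAt_sin x)))
    refine h.congr_deriv ?_
    simp only [Pi.pow_apply]
    have := hne x
    field_simp
    ring
  have hφ1 : ∀ x : ℝ, HasDerivAt (fun f => K₅ * Real.sin f + K₆ * Real.cos f)
      (K₅ * Real.cos x + K₆ * -Real.sin x) x :=
    fun x => ((Real.hasDerivAt_sin x).const_mul K₅).add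
      ((Real.hasDerivAt_cos x).const_mul K₆)
  -- second derivatives
  have hρ2 : ∀ x : ℝ, HasDerivAt
      (fun f => -(3/2 * e * K₁) * ((-e) * Real.sin f ^ 2 * J f + Real.sin f / (1 + e * Real.cos f)
          + (1 + e * Real.cos f) * J f * Real.cos f)
        + K₂ * ((-e) * Real.sin f ^ 2 + (1 + e * Real.cos f) * Real.cos f)
        + K₃ * ((-e) * (Real.sin f * Real.cos f) - (1 + e * Real.cos f) * Real.sin f))
      (-(3/2 * e * K₁) * ((-3 * e) * (Real.sin x * Real.cos x) * J x
          - (1 + e * Real.cos x) * J x * Real.sin x + 2 * Real.cos x / (1 + e * Real.cos x))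
        + K₂ * ((-4 * e) * (Real.sin x * Real.cos x) - Real.sin x)
        + K₃ * (2 * e * Real.sin x ^ 2 - 2 * e * Real.cos x ^ 2 - Real.cos x)) x := by
    intro x
    have h := ((((((((Real.hasDerivAt_sin x).pow 2).const_mul (-e)).mul (hJD x)).add
          ((Real.hasDerivAt_sin x).div (hK x) (hne x))).add
          (((hK x).mul (hJD x)).mul (Real.hasDerivAt_cos x))).const_mul (-(3/2 * e * K₁))).add
        (((((Real.hasDerivAt_sin x).pow 2).const_mul (-e)).add
          ((hK x).mul (Real.hasDerivAt_cos x))).const_mul K₂)).add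
        (((((Real.hasDerivAt_sin x).mul (Real.hasDerivAt_cos x)).const_mul (-e)).sub
          ((hK x).mul (Real.hasDerivAt_sin x))).const_mul K₃)
    refine h.congr_deriv ?_
    simp only [Pi.mul_apply, Pi.pow_apply]
    have := hne x
    field_simp
    ring
  have hθ2 : ∀ x : ℝ, HasDerivAt
      (fun f => -(3/2 * K₁) + 3 * e * K₁ * ((1 + e * Real.cos f) * Real.sin f * J f)
        + K₂ * ((-e) * (Real.sin f * Real.cos f) - (2 + e * Real.cos f) * Real.sin f)
        - K₃ * ((2 + e * Real.cos f) * Real.cos f - e * Real.sin f ^ 2))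
      (3 * e * K₁ * ((1 + e * Real.cos x) * Real.cos x * J x - e * Real.sin x ^ 2 * J x
          + Real.sin x / (1 + e * Real.cos x))
        + K₂ * (2 * e * Real.sin x ^ 2 - 2 * e * Real.cos x ^ 2 - 2 * Real.cos x)
        + K₃ * (4 * e * (Real.sin x * Real.cos x) + 2 * Real.sin x)) x := by
    intro x
    have h := ((((((hK x).mul (Real.hasDerivAt_sin x)).mul (hJD x)).const_mul
          (3 * e * K₁)).const_add (-(3/2 * K₁))).add
        (((((Real.hasDerivAt_sin x).mul (Real.hasDerivAt_cos x)).const_mul (-e)).sub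
          ((((Real.hasDerivAt_cos x).const_mul e).const_add 2).mul
            (Real.hasDerivAt_sin x))).const_mul K₂)).sub
        ((((((Real.hasDerivAt_cos x).const_mul e).const_add 2).mul (Real.hasDerivAt_cos x)).sub
          (((Real.hasDerivAt_sin x).pow 2).const_mul e)).const_mul K₃)
    refine h.congr_deriv ?_
    simp only [Pi.mul_apply]
    have := hne x
    field_simp
    ring
  have hφ2 : ∀ x : ℝ, HasDerivAt (fun f => K₅ * Real.cos f + K₆ * -Real.sin f)
      (K₅ * -Real.sin x + K₆ * -Real.cos x) x :=
    fun x => ((Real.hasDerivAt_cos x).const_mul K₅).add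
      (((Real.hasDerivAt_sin x).neg).const_mul K₆)
  have dρ : deriv (fun f => K₁ * (1 - (3/2) * e * (1 + e * Real.cos f) * J f * Real.sin f)
      + K₂ * (1 + e * Real.cos f) * Real.sin f + K₃ * (1 + e * Real.cos f) * Real.cos f)
      = fun x => -(3/2 * e * K₁) * ((-e) * Real.sin x ^ 2 * J x
          + Real.sin x / (1 + e * Real.cos x) + (1 + e * Real.cos x) * J x * Real.cos x)
        + K₂ * ((-e) * Real.sin x ^ 2 + (1 + e * Real.cos x) * Real.cos x)
        + K₃ * ((-e) * (Real.sin x * Real.cos x) - (1 + e * Real.cos x) * Real.sin x) :=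
    funext fun x => (hρ1 x).deriv
  have dθ : deriv (fun f => K₄ - (3/2) * K₁ * (1 + e * Real.cos f) ^ 2 * J f
      + K₂ * (1 + (1 + e * Real.cos f)) * Real.cos f
      - K₃ * (1 + (1 + e * Real.cos f)) * Real.sin f)
      = fun x => -(3/2 * K₁) + 3 * e * K₁ * ((1 + e * Real.cos x) * Real.sin x * J x)
        + K₂ * ((-e) * (Real.sin x * Real.cos x) - (2 + e * Real.cos x) * Real.sin x)
        - K₃ * ((2 + e * Real.cos x) * Real.cos x - e * Real.sin x ^ 2) :=
    funext fun x => (hθ1 x).deriv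
  have dφ : deriv (fun f => K₅ * Real.sin f + K₆ * Real.cos f)
      = fun x => K₅ * Real.cos x + K₆ * -Real.sin x := funext fun x => (hφ1 x).deriv
  simp only [hk]
  refine ⟨fun x => ?_, fun x => ?_, fun x => ?_⟩
  · rw [dρ, (hρ2 x).deriv, dθ]
    have := hne x
    field_simp
    ring
  · rw [dθ, (hθ2 x).deriv, dρ]
    have := hne x
    field_simp
    ring
  · rw [dφ, (hφ2 x).deriv]
    ring
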